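/- Let G be a Lie group with Lie algebra 𝔤 and τ: 𝔤 → G as above with right-trivialised differential dτ_ξ. Then for every ξ ∈ 𝔤 the coadjoint map satisfies Ad*_{τ(ξ)} = (dτ_{-ξ}^{-1})* ∘ (dτ_ξ)* as linear maps 𝔤* → 𝔤*. -/

import Mathlib

open Matrix

attribute [local instance] Matrix.normedAddCommGroup Matrix.normedSpace

/-- The right-trivialised differential `dτ_ξ` as a linear map, for a matrix Lie group. -/
noncomputable def dtauL {n : ℕ} (τ : Matrix (Fin n) (Fin n) ℝ → Matrix (Fin n) (Fin n) ℝ)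
    (ξ : Matrix (Fin n) (Fin n) ℝ) :
    Matrix (Fin n) (Fin n) ℝ →ₗ[ℝ] Matrix (Fin n) (Fin n) ℝ :=
  (LinearMap.mulRight ℝ ((τ ξ)⁻¹)).comp (fderiv ℝ τ ξ).toLinearMap

/-- The adjoint action `Ad_g(η) = g η g⁻¹` as a linear map, for a matrix Lie group. -/
noncomputable def AdL {n : ℕ} (g : Matrix (Fin n) (Fin n) ℝ) :
    Matrix (Fin n) (Fin n) ℝ →ₗ[ℝ] Matrix (Fin n) (Fin n) ℝ :=
  (LinearMap.mulLeft ℝ g).comp (LinearMap.mulRight ℝ g⁻¹)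

noncomputable def mulCLM (n : ℕ) : Matrix (Fin n) (Fin n) ℝ →L[ℝ]
    Matrix (Fin n) (Fin n) ℝ →L[ℝ] Matrix (Fin n) (Fin n) ℝ :=
  LinearMap.toContinuousLinearMap
  { toFun := fun a => LinearMap.toContinuousLinearMap (LinearMap.mulLeft ℝ a)
    map_add' := by
      intro a b; ext v
      simp [add_mul]
    map_smul' := by
      intro c a; ext v
      simp [smul_mul_assoc] }

@[simp] lemma mulCLM_apply {n : ℕ} (a b : Matrix (Fin n) (Fin n) ℝ) :
    mulCLM n a b = a * b := by
  simp [mulCLM]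

/-- `Ad*_{τ(ξ)} = (dτ_{-ξ}⁻¹)* ∘ (dτ_ξ)*` as linear maps `𝔤* → 𝔤*`. -/
theorem stmt1 {n : ℕ} (τ : Matrix (Fin n) (Fin n) ℝ → Matrix (Fin n) (Fin n) ℝ)
    (hτ : Differentiable ℝ τ) (h0 : τ 0 = 1)
    (hτinv : ∀ η, τ (-η) * τ η = 1)
    (ξ : Matrix (Fin n) (Fin n) ℝ)
    (e : Matrix (Fin n) (Fin n) ℝ ≃ₗ[ℝ] Matrix (Fin n) (Fin n) ℝ)
    (he : (e : Matrix (Fin n) (Fin n) ℝ →ₗ[ℝ] Matrix (Fin n) (Fin n) ℝ) = dtauL τ (-ξ)) :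
    (AdL (τ ξ)).dualMap
      = ((e.symm : Matrix (Fin n) (Fin n) ℝ →ₗ[ℝ] Matrix (Fin n) (Fin n) ℝ).dualMap).comp
          ((dtauL τ ξ).dualMap) := by
  have hli : τ (-ξ) * τ ξ = 1 := hτinv ξ
  have hri : τ ξ * τ (-ξ) = 1 := mul_eq_one_comm.mp hli
  have hinv : (τ ξ)⁻¹ = τ (-ξ) := Matrix.inv_eq_left_inv hli
  have hinv2 : (τ (-ξ))⁻¹ = τ ξ := Matrix.inv_eq_right_inv hli
  set A := fderiv ℝ τ ξ with hA
  set B := fderiv ℝ τ (-ξ) with hB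
  -- derivative of η ↦ τ(-η)
  have hneg : HasFDerivAt (fun η : Matrix (Fin n) (Fin n) ℝ => -η)
      (-(ContinuousLinearMap.id ℝ (Matrix (Fin n) (Fin n) ℝ))) ξ := (hasFDerivAt_id ξ).neg
  have hcomp : HasFDerivAt (fun η => τ (-η))
      (B.comp (-(ContinuousLinearMap.id ℝ (Matrix (Fin n) (Fin n) ℝ)))) ξ :=
    HasFDerivAt.comp ξ (hτ (-ξ)).hasFDerivAt hneg
  have hbil := (mulCLM n).isBoundedBilinearMap
  have hprod : HasFDerivAt (fun η => (τ (-η), τ η))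
      ((B.comp (-(ContinuousLinearMap.id ℝ (Matrix (Fin n) (Fin n) ℝ)))).prod A) ξ :=
    hcomp.prodMk (hτ ξ).hasFDerivAt
  have hmul : HasFDerivAt (fun η => τ (-η) * τ η)
      ((hbil.deriv (τ (-ξ), τ ξ)).comp
        ((B.comp (-(ContinuousLinearMap.id ℝ (Matrix (Fin n) (Fin n) ℝ)))).prod A)) ξ := by
    have h := (hbil.hasFDerivAt (τ (-ξ), τ ξ)).comp ξ hprod
    exact h
  have hconst : HasFDerivAt (fun η => τ (-η) * τ η)
      (0 : Matrix (Fin n) (Fin n) ℝ →L[ℝ] Matrix (Fin n) (Fin n) ℝ) ξ := by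
    have : (fun η : Matrix (Fin n) (Fin n) ℝ => τ (-η) * τ η) = fun _ => (1 : Matrix (Fin n) (Fin n) ℝ) :=
      funext hτinv
    rw [this]
    exact hasFDerivAt_const _ _
  have hzero := hmul.unique hconst
  have hkey : ∀ v, τ (-ξ) * A v = B v * τ ξ := by
    intro v
    have := congrArg (fun (L : Matrix (Fin n) (Fin n) ℝ →L[ℝ] Matrix (Fin n) (Fin n) ℝ) => L v) hzero
    erw [ContinuousLinearMap.comp_apply] at this
    erw [ContinuousLinearMap.prod_apply] at this
    erw [IsBoundedBilinearMap.deriv_apply] at this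
    erw [mulCLM_apply, mulCLM_apply] at this
    have h3 : (B.comp (-(ContinuousLinearMap.id ℝ (Matrix (Fin n) (Fin n) ℝ)))) v = -(B v) := by simp
    erw [h3, ContinuousLinearMap.zero_apply] at this
    replace this : τ (-ξ) * A v + -(B v) * τ ξ = 0 := this
    linear_combination (norm := noncomm_ring) this
  have hAd : AdL (τ ξ) = (dtauL τ ξ).comp (e.symm : Matrix (Fin n) (Fin n) ℝ →ₗ[ℝ] Matrix (Fin n) (Fin n) ℝ) := by
    have h1 : (AdL (τ ξ)).comp (e : Matrix (Fin n) (Fin n) ℝ →ₗ[ℝ] Matrix (Fin n) (Fin n) ℝ)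
        = dtauL τ ξ := by
      rw [he]
      refine LinearMap.ext fun v => ?_
      simp only [LinearMap.comp_apply, dtauL, AdL, LinearMap.mulLeft_apply, LinearMap.mulRight_apply,
        ContinuousLinearMap.coe_coe, LinearMap.coe_comp, Function.comp_apply]
      rw [hinv, hinv2]
      have h2 : A v * τ (-ξ) = τ ξ * B v := by
        have := hkey v
        calc A v * τ (-ξ) = (τ ξ * τ (-ξ)) * (A v * τ (-ξ)) := by rw [hri, one_mul]
          _ = τ ξ * (τ (-ξ) * A v) * τ (-ξ) := by noncomm_ring
          _ = τ ξ * (B v * τ ξ) * τ (-ξ) := by rw [this]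
          _ = τ ξ * B v * (τ ξ * τ (-ξ)) := by noncomm_ring
          _ = τ ξ * B v := by rw [hri, mul_one]
      calc τ ξ * (B v * τ ξ * τ (-ξ)) = τ ξ * (B v * (τ ξ * τ (-ξ))) := by noncomm_ring
        _ = τ ξ * B v := by rw [hri, mul_one]
        _ = A v * τ (-ξ) := h2.symm
    calc AdL (τ ξ) = ((AdL (τ ξ)).comp (e : Matrix (Fin n) (Fin n) ℝ →ₗ[ℝ] Matrix (Fin n) (Fin n) ℝ)).comp
          (e.symm : Matrix (Fin n) (Fin n) ℝ →ₗ[ℝ] Matrix (Fin n) (Fin n) ℝ) := by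
          ext v; simp
      _ = (dtauL τ ξ).comp (e.symm : Matrix (Fin n) (Fin n) ℝ →ₗ[ℝ] Matrix (Fin n) (Fin n) ℝ) := by rw [h1]
  rw [hAd, LinearMap.dualMap_comp_dualMap]
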